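/- Any weak-* accumulation point, as λ → 1⁻, of the discounted occupation measures μ̃^λ_{x̄^λ} (associated to arbitrary backward sequences x̄^λ) is a closed measure: its two marginals on M coincide. -/

import Mathlib

open MeasureTheory Filter Topology

/-- The discounted occupation measure `μ̃^λ_{x̄} = (1-λ) ∑ λⁿ δ_{(x_{-n-1}, x_{-n})}`. -/
noncomputable def discountedOccupation {M : Type*} [MeasurableSpace M]
    (lam : ℝ) (p : ℕ → M) : Measure (M × M) :=
  Measure.sum fun n : ℕ =>
    (ENNReal.ofReal ((1 - lam) * lam ^ n)) • Measure.dirac (p (n + 1), p n)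

lemma integral_discountedOccupation {M : Type*} [MetricSpace M] [CompactSpace M]
    [MeasurableSpace M] [BorelSpace M]
    {lam : ℝ} (h0 : 0 < lam) (h1 : lam < 1) (p : ℕ → M) (f : C(M × M, ℝ)) :
    ∫ z, f z ∂(discountedOccupation lam p)
      = ∑' n : ℕ, (1 - lam) * lam ^ n * f (p (n + 1), p n) := by
  have hnn : ∀ n : ℕ, 0 ≤ (1 - lam) * lam ^ n := fun n =>
    mul_nonneg (by linarith) (pow_nonneg h0.le n)
  have hint : Integrable (fun z => f z) (discountedOccupation lam p) := by
    have hfin : IsFiniteMeasure (discountedOccupation lam p) := by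
      constructor
      rw [discountedOccupation, Measure.sum_apply _ MeasurableSet.univ]
      simp only [Measure.smul_apply, Measure.dirac_apply_of_mem (Set.mem_univ _),
        smul_eq_mul, mul_one]
      calc ∑' n : ℕ, ENNReal.ofReal ((1 - lam) * lam ^ n)
          = ENNReal.ofReal (∑' n : ℕ, (1 - lam) * lam ^ n) := by
            rw [ENNReal.ofReal_tsum_of_nonneg hnn]
            exact (summable_geometric_of_lt_one h0.le h1).mul_left _
        _ < ⊤ := ENNReal.ofReal_lt_top
    refine Integrable.mono' (integrable_const ‖f‖)
      f.continuous.measurable.aestronglyMeasurable ?_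
    exact Eventually.of_forall fun z => f.norm_coe_le_norm z
  rw [discountedOccupation, integral_sum_measure hint]
  congr 1
  ext n
  rw [integral_smul_measure, integral_dirac _ _, ENNReal.toReal_ofReal (hnn n), smul_eq_mul]

/-- Any weak-* accumulation point, as `λ → 1⁻`, of discounted occupation measures
associated to arbitrary backward sequences is a closed measure: its two marginals
coincide. -/
theorem accumulation_of_discountedOccupation_isClosed
    {M : Type*} [MetricSpace M] [CompactSpace M] [Nonempty M]
    [MeasurableSpace M] [BorelSpace M]
    (p : ℝ → ℕ → M)
    (μt : Measure (M × M)) [IsProbabilityMeasure μt]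
    (lams : ℕ → ℝ) (h0 : ∀ i, 0 < lams i) (h1 : ∀ i, lams i < 1)
    (hlims : Tendsto lams atTop (𝓝 1))
    (hconv : ∀ f : C(M × M, ℝ),
      Tendsto (fun i => ∫ z, f z ∂(discountedOccupation (lams i) (p (lams i))))
        atTop (𝓝 (∫ z, f z ∂μt))) :
    μt.map Prod.fst = μt.map Prod.snd := by
  -- Step 1: for every continuous real f on M, ∫ f∘fst dμt = ∫ f∘snd dμt.
  have key : ∀ f : C(M, ℝ), ∫ x, f x ∂(μt.map Prod.fst) = ∫ x, f x ∂(μt.map Prod.snd) := by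
    intro f
    set g : C(M × M, ℝ) := (f.comp ⟨Prod.fst, continuous_fst⟩) - (f.comp ⟨Prod.snd, continuous_snd⟩) with hg
    -- the discounted integral of g tends to 0
    have hzero : Tendsto (fun i => ∫ z, g z ∂(discountedOccupation (lams i) (p (lams i))))
        atTop (𝓝 0) := by
      have hbound : ∀ i, ‖∫ z, g z ∂(discountedOccupation (lams i) (p (lams i)))‖
          ≤ (1 - lams i) / lams i * (2 * ‖f‖) := by
        intro i
        set lam := lams i
        have hl0 := h0 i; have hl1 := h1 i
        set a : ℕ → ℝ := fun n => f (p lam n) with ha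
        have hbd : ∀ (q : ℕ → ℝ), (∀ n, ‖q n‖ ≤ ‖f‖) →
            Summable (fun n : ℕ => (1 - lam) * lam ^ n * q n) := by
          intro q hq
          apply Summable.of_norm_bounded (g := fun n => (1 - lam) * lam ^ n * ‖f‖)
          · exact ((summable_geometric_of_lt_one hl0.le hl1).mul_left _).mul_right _
          · intro n
            rw [norm_mul, norm_mul, norm_pow,
              Real.norm_of_nonneg (by linarith : (0:ℝ) ≤ 1 - lam),
              Real.norm_of_nonneg hl0.le]
            gcongr
            · exact hq n
        have hsum0 : Summable (fun n : ℕ => (1 - lam) * lam ^ n * a n) :=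
          hbd a fun n => f.norm_coe_le_norm _
        set T : ℝ := ∑' n : ℕ, (1 - lam) * lam ^ n * a n with hT
        have hTle : ‖T‖ ≤ ‖f‖ := by
          calc ‖T‖ ≤ ∑' n : ℕ, ‖(1 - lam) * lam ^ n * a n‖ :=
                norm_tsum_le_tsum_norm hsum0.norm
            _ ≤ ∑' n : ℕ, (1 - lam) * lam ^ n * ‖f‖ := by
                apply Summable.tsum_le_tsum _ hsum0.norm
                  (((summable_geometric_of_lt_one hl0.le hl1).mul_left _).mul_right _)
                intro n
                rw [norm_mul, norm_mul, norm_pow,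
                  Real.norm_of_nonneg (by linarith : (0:ℝ) ≤ 1 - lam),
                  Real.norm_of_nonneg hl0.le]
                gcongr
                · exact f.norm_coe_le_norm _
            _ = (1 - lam) * (1 - lam)⁻¹ * ‖f‖ := by
                rw [tsum_mul_right, tsum_mul_left, tsum_geometric_of_lt_one hl0.le hl1]
            _ = ‖f‖ := by
                rw [mul_inv_cancel₀ (by linarith), one_mul]
        -- compute the integral of g
        have hcalc : ∫ z, g z ∂(discountedOccupation lam (p lam))
            = (1 - lam) / lam * (T - a 0) := by
          rw [integral_discountedOccupation hl0 hl1]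
          have hne : lam ≠ 0 := hl0.ne'
          have hs1 : Summable (fun n : ℕ => (1 - lam) * lam ^ n * a (n + 1)) :=
            hbd (fun n => a (n + 1)) fun n => f.norm_coe_le_norm _
          have hgval : ∀ n : ℕ, (1 - lam) * lam ^ n * g (p lam (n + 1), p lam n)
              = (1 - lam) * lam ^ n * a (n + 1) - (1 - lam) * lam ^ n * a n := by
            intro n
            simp only [hg, ContinuousMap.sub_apply, ContinuousMap.comp_apply,
              ContinuousMap.coe_mk]
            ring
          calc ∑' n : ℕ, (1 - lam) * lam ^ n * g (p lam (n + 1), p lam n)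
              = ∑' n : ℕ, ((1 - lam) * lam ^ n * a (n + 1) - (1 - lam) * lam ^ n * a n) := by
                exact tsum_congr hgval
            _ = (∑' n : ℕ, (1 - lam) * lam ^ n * a (n + 1)) - T := by
                rw [hT]; exact Summable.tsum_sub hs1 hsum0
            _ = lam⁻¹ * (∑' n : ℕ, (1 - lam) * lam ^ (n + 1) * a (n + 1)) - T := by
                rw [← tsum_mul_left]
                congr 1
                apply tsum_congr
                intro n
                field_simp
                ring
            _ = lam⁻¹ * (T - (1 - lam) * lam ^ 0 * a 0) - T := by
                congr 2
                have := Summable.tsum_eq_zero_add hsum0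
                rw [hT, this]; ring
            _ = (1 - lam) / lam * (T - a 0) := by
                field_simp
                ring
        rw [hcalc, norm_mul,
          Real.norm_of_nonneg (div_nonneg (by linarith : (0:ℝ) ≤ 1 - lam) hl0.le)]
        gcongr
        calc ‖T - a 0‖ ≤ ‖T‖ + ‖a 0‖ := norm_sub_le _ _
          _ ≤ ‖f‖ + ‖f‖ := add_le_add hTle (f.norm_coe_le_norm _)
          _ = 2 * ‖f‖ := by ring
      have hbnd0 : Tendsto (fun i => (1 - lams i) / lams i * (2 * ‖f‖)) atTop (𝓝 0) := by
        have : Tendsto (fun i => (1 - lams i) / lams i * (2 * ‖f‖)) atTop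
            (𝓝 ((1 - 1) / 1 * (2 * ‖f‖))) := by
          apply Tendsto.mul _ tendsto_const_nhds
          exact ((tendsto_const_nhds.sub hlims).div hlims one_ne_zero)
        simpa using this
      exact squeeze_zero_norm hbound hbnd0
    have h0' : ∫ z, g z ∂μt = 0 := tendsto_nhds_unique (hconv g) hzero
    have hsub : ∫ z, g z ∂μt
        = (∫ z, f z.1 ∂μt) - ∫ z, f z.2 ∂μt := by
      have hi1 : Integrable (fun z : M × M => f z.1) μt := by
        refine Integrable.mono' (integrable_const ‖f‖)
          (f.continuous.comp continuous_fst).measurable.aestronglyMeasurable ?_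
        exact Eventually.of_forall fun z => f.norm_coe_le_norm _
      have hi2 : Integrable (fun z : M × M => f z.2) μt := by
        refine Integrable.mono' (integrable_const ‖f‖)
          (f.continuous.comp continuous_snd).measurable.aestronglyMeasurable ?_
        exact Eventually.of_forall fun z => f.norm_coe_le_norm _
      simp only [hg, ContinuousMap.sub_apply, ContinuousMap.comp_apply, ContinuousMap.coe_mk]
      exact integral_sub hi1 hi2
    have heq : (∫ z, f z.1 ∂μt) = ∫ z, f z.2 ∂μt := by
      have := hsub ▸ h0'
      linarith [this]
    rw [integral_map measurable_fst.aemeasurable f.continuous.measurable.aestronglyMeasurable,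
      integral_map measurable_snd.aemeasurable f.continuous.measurable.aestronglyMeasurable]
    exact heq
  -- Step 2: deduce equality of the marginals.
  have hfst : IsProbabilityMeasure (μt.map Prod.fst) :=
    Measure.isProbabilityMeasure_map measurable_fst.aemeasurable
  have hsnd : IsProbabilityMeasure (μt.map Prod.snd) :=
    Measure.isProbabilityMeasure_map measurable_snd.aemeasurable
  apply ext_of_forall_lintegral_eq_of_IsFiniteMeasure
  intro f
  have h1' : (∫⁻ x, (f x : ENNReal) ∂(μt.map Prod.fst)).toReal
      = (∫⁻ x, (f x : ENNReal) ∂(μt.map Prod.snd)).toReal := by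
    rw [BoundedContinuousFunction.toReal_lintegral_coe_eq_integral,
      BoundedContinuousFunction.toReal_lintegral_coe_eq_integral]
    exact key ⟨fun x => (f x : ℝ), NNReal.continuous_coe.comp f.continuous⟩
  exact (ENNReal.toReal_eq_toReal_iff'
    (BoundedContinuousFunction.lintegral_lt_top_of_nnreal _ f).ne
    (BoundedContinuousFunction.lintegral_lt_top_of_nnreal _ f).ne).mp h1'
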